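/- Let $V$ be a finite-dimensional real inner product space with basis $\alpha_1, \dots, \alpha_r$ such that $\langle \alpha_i, \alpha_j\rangle \le 0$ for $i \neq j$, and dual basis $\varpi_1, \dots, \varpi_r$ ($\langle \alpha_i, \varpi_j\rangle = \delta_{ij}$) with $\langle \varpi_i, \varpi_j\rangle \ge 0$ for all $i,j$. Let $C^- = \{Y \mid \forall i, \langle\alpha_i, Y\rangle \le 0\}$. Then there exists $\tau > 0$ such that for all $\varepsilon \in (0,1)$ and all $Y_1, Y_2 \in C^-$ with $\langle\varpi_i, Y_1\rangle \le \langle\varpi_i, Y_2\rangle$ for all $i$ and $\|Y_2 - Y_1\| \ge -\log\varepsilon$, there exists an index $k$ with both $\langle\varpi_k, Y_1\rangle \le \langle\varpi_k, Y_2\rangle + \tau \log\varepsilon$ and $\langle\alpha_k, Y_1\rangle \le \tau\log\varepsilon$. -/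

import Mathlib

open scoped RealInnerProductSpace

/-- A large gap between two Weyl-chamber elements in the dominance order forces,
for some index `k`, a definite drop in the `k`-th fundamental-weight coordinate
together with strict negativity of the `k`-th simple root. -/
theorem stmt_7 {V : Type*} [NormedAddCommGroup V] [InnerProductSpace ℝ V]
    [FiniteDimensional ℝ V] {r : ℕ}
    (α : Module.Basis (Fin r) ℝ V) (ϖ : Fin r → V)
    (hdual : ∀ i j, ⟪α i, ϖ j⟫ = if i = j then (1 : ℝ) else 0)
    (hobtuse : ∀ i j, i ≠ j → ⟪α i, α j⟫ ≤ 0)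
    (hweights : ∀ i j, 0 ≤ ⟪ϖ i, ϖ j⟫) :
    ∃ τ : ℝ, 0 < τ ∧ ∀ ε : ℝ, 0 < ε → ε < 1 → ∀ Y₁ Y₂ : V,
      (∀ i, ⟪α i, Y₁⟫ ≤ 0) → (∀ i, ⟪α i, Y₂⟫ ≤ 0) →
      (∀ i, ⟪ϖ i, Y₁⟫ ≤ ⟪ϖ i, Y₂⟫) →
      -Real.log ε ≤ ‖Y₂ - Y₁‖ →
      ∃ k, ⟪ϖ k, Y₁⟫ ≤ ⟪ϖ k, Y₂⟫ + τ * Real.log ε ∧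
        ⟪α k, Y₁⟫ ≤ τ * Real.log ε := by
  classical
  set K : ℝ := 1 + ∑ i, (‖α i‖ + ‖ϖ i‖) with hKdef
  have hKpos : 0 < K := by
    have : 0 ≤ ∑ i, (‖α i‖ + ‖ϖ i‖) :=
      Finset.sum_nonneg fun i _ => by positivity
    linarith
  have hKb : ∀ i : Fin r, ‖α i‖ ≤ K ∧ ‖ϖ i‖ ≤ K := by
    intro i
    have h := Finset.single_le_sum (f := fun i => ‖α i‖ + ‖ϖ i‖)
      (fun i _ => by positivity) (Finset.mem_univ i)
    have h' : ‖α i‖ + ‖ϖ i‖ ≤ ∑ x : Fin r, (‖α x‖ + ‖ϖ x‖) := h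
    have h1 := norm_nonneg (α i)
    have h2 := norm_nonneg (ϖ i)
    constructor <;> (rw [hKdef]; linarith)
  refine ⟨1 / (2 * (r + 1) * K), by positivity, ?_⟩
  set τ : ℝ := 1 / (2 * (r + 1) * K) with hτdef
  intro ε hε0 hε1 Y₁ Y₂ hY₁ hY₂ hdom hgap
  by_contra hcon
  push_neg at hcon
  set L : ℝ := -Real.log ε with hLdef
  have hL : 0 < L := by
    have := Real.log_neg hε0 hε1
    rw [hLdef]; linarith
  set D : V := Y₂ - Y₁ with hDdef
  have hDnorm : L ≤ ‖D‖ := hgap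
  have hτpos : 0 < τ := by rw [hτdef]; positivity
  have hrepr : ∀ (Y : V) (j : Fin r), α.repr Y j = ⟪ϖ j, Y⟫ := by
    intro Y j
    conv_rhs => rw [← α.sum_repr Y]
    rw [inner_sum]
    rw [Finset.sum_eq_single j]
    · rw [real_inner_smul_right, real_inner_comm, hdual, if_pos rfl, mul_one]
    · intro i _ hij
      rw [real_inner_smul_right, real_inner_comm, hdual, if_neg hij, mul_zero]
    · intro h; exact absurd (Finset.mem_univ j) h
  have hexp : ⟪D, D⟫ = ∑ i, ⟪ϖ i, D⟫ * ⟪α i, D⟫ := by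
    conv_lhs => rw [← α.sum_repr D]
    rw [sum_inner]
    refine Finset.sum_congr rfl fun i _ => ?_
    rw [real_inner_smul_left, hrepr, α.sum_repr]
  have hterm : ∀ i : Fin r, ⟪ϖ i, D⟫ * ⟪α i, D⟫ ≤ (K * ‖D‖) * (τ * L) := by
    intro i
    have hd0 : 0 ≤ ⟪ϖ i, D⟫ := by
      have := hdom i
      rw [hDdef, inner_sub_right]; linarith
    have hτL : 0 ≤ τ * L := by positivity
    have hKD : 0 ≤ K * ‖D‖ := by positivity
    have hLε : τ * L = -(τ * Real.log ε) := by rw [hLdef]; ring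
    by_cases hi : ⟪ϖ i, Y₁⟫ ≤ ⟪ϖ i, Y₂⟫ + τ * Real.log ε
    · have hαY₁ := hcon i hi
      have hx : ⟪α i, D⟫ ≤ τ * L := by
        have h2 := hY₂ i
        rw [hDdef, inner_sub_right]
        linarith
      calc ⟪ϖ i, D⟫ * ⟪α i, D⟫ ≤ ⟪ϖ i, D⟫ * (τ * L) :=
            mul_le_mul_of_nonneg_left hx hd0
        _ ≤ (K * ‖D‖) * (τ * L) := by
            refine mul_le_mul_of_nonneg_right ?_ hτL
            calc ⟪ϖ i, D⟫ ≤ ‖ϖ i‖ * ‖D‖ :=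
                  le_trans (le_abs_self _) (abs_real_inner_le_norm _ _)
              _ ≤ K * ‖D‖ := mul_le_mul_of_nonneg_right (hKb i).2 (norm_nonneg _)
    · push_neg at hi
      have hd_small : ⟪ϖ i, D⟫ ≤ τ * L := by
        rw [hDdef, inner_sub_right]
        linarith
      have hx : ⟪α i, D⟫ ≤ K * ‖D‖ := by
        calc ⟪α i, D⟫ ≤ ‖α i‖ * ‖D‖ :=
              le_trans (le_abs_self _) (abs_real_inner_le_norm _ _)
          _ ≤ K * ‖D‖ := mul_le_mul_of_nonneg_right (hKb i).1 (norm_nonneg _)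
      calc ⟪ϖ i, D⟫ * ⟪α i, D⟫ ≤ ⟪ϖ i, D⟫ * (K * ‖D‖) :=
            mul_le_mul_of_nonneg_left hx hd0
        _ ≤ (τ * L) * (K * ‖D‖) := mul_le_mul_of_nonneg_right hd_small hKD
        _ = (K * ‖D‖) * (τ * L) := by ring
  have hsum : ⟪D, D⟫ ≤ (r : ℝ) * ((K * ‖D‖) * (τ * L)) := by
    rw [hexp]
    calc ∑ i, ⟪ϖ i, D⟫ * ⟪α i, D⟫ ≤ ∑ _i : Fin r, (K * ‖D‖) * (τ * L) :=
          Finset.sum_le_sum fun i _ => hterm i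
      _ = (r : ℝ) * ((K * ‖D‖) * (τ * L)) := by
          simp [Finset.sum_const, Finset.card_univ]
  have hDD : ⟪D, D⟫ = ‖D‖ ^ 2 := real_inner_self_eq_norm_sq D
  have hτK : τ * ((r : ℝ) * K) ≤ 1 / 2 := by
    rw [hτdef, div_mul_eq_mul_div, one_mul,
      div_le_div_iff₀ (by positivity) (by norm_num)]
    nlinarith [hKpos]
  have h1 : (r : ℝ) * ((K * ‖D‖) * (τ * L)) = (τ * ((r : ℝ) * K)) * (‖D‖ * L) := by
    ring
  have h2 : (τ * ((r : ℝ) * K)) * (‖D‖ * L) ≤ (1 / 2) * (‖D‖ * L) :=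
    mul_le_mul_of_nonneg_right hτK
      (mul_nonneg (norm_nonneg D) hL.le)
  have h3 : ‖D‖ * L ≤ ‖D‖ * ‖D‖ := mul_le_mul_of_nonneg_left hDnorm (norm_nonneg D)
  have h4 : L * L ≤ ‖D‖ * L := mul_le_mul_of_nonneg_right hDnorm hL.le
  have h5 : 0 < L * L := mul_pos hL hL
  have hsq : ‖D‖ ^ 2 = ‖D‖ * ‖D‖ := sq ‖D‖
  have hA : ‖D‖ * L ≤ 1 / 2 * (‖D‖ * L) := by
    calc ‖D‖ * L ≤ ‖D‖ * ‖D‖ := h3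
      _ = ⟪D, D⟫ := by rw [hDD, hsq]
      _ ≤ (r : ℝ) * ((K * ‖D‖) * (τ * L)) := hsum
      _ = (τ * ((r : ℝ) * K)) * (‖D‖ * L) := h1
      _ ≤ 1 / 2 * (‖D‖ * L) := h2
  clear_value K τ L D
  linarith
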